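/- For every integer k ≥ 2, the infimum over all bi-Lipschitz embeddings f : Δ_k → C([0, ω^{k−1}]) of the distortion dist(f) equals k/(k−1), and this infimum is attained by some embedding. -/

import Mathlib

/-- The compact space `[0, α]` of ordinals `≤ α` with the order topology. -/
noncomputable instance (a : Ordinal) : CompactSpace (Set.Iic a) :=
  isCompact_iff_compactSpace.mp (by rw [← Set.Icc_bot]; exact isCompact_Icc)

open Ordinal Set Filter Topology

noncomputable section

universe u

namespace DeltaKProof


/-- From an infinite set of ordinals extract a strictly monotone sequence. -/
lemma exists_strictMono_seq_of_infinite {S : Set Ordinal} (hS : S.Infinite) :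
    ∃ u : ℕ → Ordinal, StrictMono u ∧ ∀ n, u n ∈ S := by
  classical
  let R : ℕ → Set Ordinal := fun n => Nat.rec S (fun _ T => T \ Iic (sInf T)) n
  have hR0 : R 0 = S := rfl
  have hRsucc : ∀ n, R (n + 1) = R n \ Iic (sInf (R n)) := fun n => rfl
  have hdiff : ∀ T : Set Ordinal, T.Nonempty → T \ Iic (sInf T) = T \ {sInf T} := by
    intro T hT
    ext x
    simp only [mem_diff, mem_Iic, mem_singleton_iff]
    constructor
    · rintro ⟨hx, hle⟩
      exact ⟨hx, fun h => hle (le_of_eq h)⟩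
    · rintro ⟨hx, hne⟩
      refine ⟨hx, fun h => hne (le_antisymm h (csInf_le' hx))⟩
  have hinf : ∀ n, (R n).Infinite := by
    intro n
    induction n with
    | zero => exact hS
    | succ n ih =>
      rw [hRsucc, hdiff _ ih.nonempty]
      exact ih.diff (Set.finite_singleton _)
  have hsub : ∀ n, R n ⊆ S := by
    intro n
    induction n with
    | zero => exact le_refl _
    | succ n ih => exact fun x hx => ih (Set.diff_subset hx)
  refine ⟨fun n => sInf (R n), strictMono_nat_of_lt_succ ?_, fun n => hsub n (csInf_mem (hinf n).nonempty)⟩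
  intro n
  have hmem : sInf (R (n+1)) ∈ R (n+1) := csInf_mem (hinf (n+1)).nonempty
  rw [hRsucc] at hmem
  have := hmem.2
  simpa using lt_of_not_ge (by simpa using this)

/-- rank predicate: `Rk r x` means `x` has Cantor-Bendixson rank at least `r`
in `[0, ω^e]` (for `r=0` it is trivially true). -/
def Rk (r : ℕ) (x : Ordinal) : Prop := r = 0 ∨ (x ≠ 0 ∧ (ω ^ (r : Ordinal)) ∣ x)

lemma Rk_zero (x : Ordinal) : Rk 0 x := Or.inl rfl

lemma rk_iSup {r : ℕ} {u : ℕ → Ordinal} (hu : StrictMono u)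
    (h : ∀ n, Rk r (u n)) : Rk (r + 1) (⨆ n, u n) := by
  have hp : (0:Ordinal) < ω ^ (r : Ordinal) := opow_pos _ omega0_pos
  set p := ω ^ (r : Ordinal) with hpdef
  have hdvd : ∀ n, p ∣ u n := by
    intro n
    rcases h n with h0 | ⟨_, hd⟩
    · subst h0
      simpa [hpdef] using one_dvd _
    · exact hd
  set γ : ℕ → Ordinal := fun n => u n / p with hγdef
  have hpγ : ∀ n, p * γ n = u n := by
    intro n
    have h1 := Ordinal.div_add_mod (u n) p
    rw [Ordinal.mod_eq_zero_of_dvd (hdvd n), add_zero] at h1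
    exact h1
  have hγmono : StrictMono γ := by
    intro a b hab
    have : p * γ a < p * γ b := by rw [hpγ, hpγ]; exact hu hab
    exact (Ordinal.isNormal_mul_right hp).strictMono.lt_iff_lt.mp this
  have hδlim : Order.IsSuccLimit (⨆ n, γ n) := by
    rw [Ordinal.isSuccLimit_iff, Order.isSuccPrelimit_iff_succ_lt]
    constructor
    · intro h0
      have h1 : γ 1 ≤ 0 := h0 ▸ Ordinal.le_iSup γ 1
      have : γ 0 < γ 1 := hγmono (by norm_num)
      exact absurd (lt_of_lt_of_le this h1) (by simp)
    · intro a ha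
      rw [Ordinal.lt_iSup_iff] at ha ⊢
      obtain ⟨n, hn⟩ := ha
      exact ⟨n + 1, lt_of_le_of_lt (Order.succ_le_of_lt hn) (lt_of_le_of_lt (le_refl _) (hγmono (Nat.lt_succ_self n)))⟩
  have hωδ : ω ∣ ⨆ n, γ n := (isSuccLimit_iff_omega0_dvd.mp hδlim).2
  have hmap : p * (⨆ n, γ n) = ⨆ n, u n := by
    rw [(Ordinal.isNormal_mul_right hp).map_iSup (Ordinal.bddAbove_range γ)]
    exact iSup_congr hpγ
  refine Or.inr ⟨?_, ?_⟩
  · intro h0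
    have h1 : u 1 ≤ 0 := h0 ▸ Ordinal.le_iSup u 1
    exact absurd (lt_of_lt_of_le (lt_of_le_of_lt zero_le (hu (by norm_num : (0:ℕ) < 1))) h1) (lt_irrefl _)
  · have : ((r:ℕ) + 1 : ℕ) = (r:ℕ) + 1 := rfl
    have hcast : ((r + 1 : ℕ) : Ordinal) = (r : Ordinal) + 1 := by push_cast; ring
    rw [hcast, Ordinal.add_one_eq_succ, opow_succ, ← hmap]
    exact mul_dvd_mul_left p hωδ



/-- Membership predicate for the clopen sets `U_m` in `[0, ω^e]`, defined by
recursion on the height `e`. -/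
def Q : ℕ → ℕ → Ordinal.{u} → Prop
  | 0, _, _ => False
  | (e+1), m, x => (ω ^ (e:Ordinal) * (m:Ordinal) < x ∧ x ≤ ω ^ (e:Ordinal) * ((m:Ordinal)+1)) ∨
      ∃ q : ℕ, q < m ∧ ω ^ (e:Ordinal) * (q:Ordinal) < x ∧ x ≤ ω ^ (e:Ordinal) * ((q:Ordinal)+1) ∧
        Q e m (x - ω ^ (e:Ordinal) * (q:Ordinal))

lemma Q_pos {e m : ℕ} {x : Ordinal.{u}} (h : Q e m x) : 0 < x := by
  cases e with
  | zero => exact absurd h id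
  | succ e =>
    rcases h with ⟨h1, _⟩ | ⟨q, _, h1, _⟩
    · exact lt_of_le_of_lt zero_le h1
    · exact lt_of_le_of_lt zero_le h1

lemma Q_le {e m : ℕ} {x : Ordinal.{u}} (h : Q (e+1) m x) :
    x ≤ ω ^ (e:Ordinal) * ((m:Ordinal)+1) := by
  rcases h with ⟨_, h2⟩ | ⟨q, hq, _, h2, _⟩
  · exact h2
  · refine le_trans h2 (mul_le_mul_right ?_ _)
    have h3 : ((q+1 : ℕ) : Ordinal.{u}) ≤ (m : Ordinal.{u}) := by
      rw [Nat.cast_le]; omega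
    rw [Nat.cast_succ] at h3
    exact le_trans h3 le_self_add

lemma col_unique {c x : Ordinal.{u}} {q q' : ℕ}
    (h1 : c * (q:Ordinal) < x) (h2 : x ≤ c * ((q:Ordinal)+1))
    (h3 : c * (q':Ordinal) < x) (h4 : x ≤ c * ((q':Ordinal)+1)) : q = q' := by
  by_contra hne
  rcases Nat.lt_or_ge q q' with h | h
  · have hle : ((q:Ordinal.{u})+1) ≤ (q':Ordinal.{u}) := by
      have h5 : ((q+1:ℕ) : Ordinal.{u}) ≤ (q' : Ordinal.{u}) := by rw [Nat.cast_le]; omega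
      rwa [Nat.cast_succ] at h5
    exact absurd (lt_of_le_of_lt (le_trans h2 (mul_le_mul_right hle _)) h3) (lt_irrefl _)
  · have hlt : q' < q := lt_of_le_of_ne h (Ne.symm hne)
    have hle : ((q':Ordinal.{u})+1) ≤ (q:Ordinal.{u}) := by
      have h5 : ((q'+1:ℕ) : Ordinal.{u}) ≤ (q : Ordinal.{u}) := by rw [Nat.cast_le]; omega
      rwa [Nat.cast_succ] at h5
    exact absurd (lt_of_le_of_lt (le_trans h4 (mul_le_mul_right hle _)) h1) (lt_irrefl _)

/-- characterization of `Q (e+1) m x` for `x` in column `n ≠ m`. -/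
lemma Q_char {e m n : ℕ} {x : Ordinal.{u}} (hmn : m ≠ n)
    (h1 : ω ^ (e:Ordinal) * (n:Ordinal) < x) (h2 : x ≤ ω ^ (e:Ordinal) * ((n:Ordinal)+1)) :
    Q (e+1) m x ↔ (n < m ∧ Q e m (x - ω ^ (e:Ordinal) * (n:Ordinal))) := by
  constructor
  · rintro (⟨ha, hb⟩ | ⟨q, hq, ha, hb, hQ⟩)
    · exact absurd (col_unique ha hb h1 h2) hmn
    · have : q = n := col_unique ha hb h1 h2
      subst this
      exact ⟨hq, hQ⟩
  · rintro ⟨hnm, hQ⟩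
    exact Or.inr ⟨n, hnm, h1, h2, hQ⟩

/-- membership of `Q (e+1) m x` for `x` in column `m`. -/
lemma Q_col {e m : ℕ} {x : Ordinal.{u}}
    (h1 : ω ^ (e:Ordinal) * (m:Ordinal) < x) (h2 : x ≤ ω ^ (e:Ordinal) * ((m:Ordinal)+1)) :
    Q (e+1) m x := Or.inl ⟨h1, h2⟩

/-- Eventual constancy of `Q e m` below each limit ordinal: this is the key to
clopen-ness of the sets `U_m`. -/
lemma Q_const : ∀ (e m : ℕ) (y : Ordinal.{u}), Order.IsSuccLimit y →
    ∃ δ, δ < y ∧ ∀ x, δ < x → x ≤ y → (Q e m x ↔ Q e m y) := by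
  intro e
  induction e with
  | zero =>
    intro m y hy
    exact ⟨0, pos_iff_ne_zero.mpr (Ordinal.isSuccLimit_iff.mp hy).1, fun x _ _ => Iff.rfl⟩
  | succ e IH =>
    intro m y hy
    have hc : (0:Ordinal.{u}) < ω ^ (e:Ordinal) := opow_pos _ omega0_pos
    have hc0 : (ω ^ (e:Ordinal.{u})) ≠ 0 := hc.ne'
    rcases lt_or_ge ((ω ^ (e:Ordinal.{u})) * ((m:Ordinal)+1)) y with hbig | hle
    · refine ⟨(ω ^ (e:Ordinal.{u})) * ((m:Ordinal)+1), hbig, fun x hx1 _ => ?_⟩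
      exact iff_of_false (fun h => absurd (Q_le h) (not_le.mpr hx1))
        (fun h => absurd (Q_le h) (not_le.mpr hbig))
    · have hyω : y < (ω ^ (e:Ordinal.{u})) * ω := by
        refine lt_of_le_of_lt hle ?_
        have h1 : ((m:Ordinal.{u})+1) < ω := by
          rw [← Nat.cast_succ]; exact nat_lt_omega0 _
        exact (Ordinal.isNormal_mul_right hc).strictMono h1
      have hq₀ : y / (ω ^ (e:Ordinal.{u})) < ω := (Ordinal.div_lt hc0).mpr hyω
      obtain ⟨n, hn⟩ := Ordinal.lt_omega0.mp hq₀
      have hyeq : (ω ^ (e:Ordinal.{u})) * (n:Ordinal) + y % (ω ^ (e:Ordinal.{u})) = y := by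
        rw [← hn]; exact Ordinal.div_add_mod y (ω ^ (e:Ordinal.{u}))
      have hrc : y % (ω ^ (e:Ordinal.{u})) < (ω ^ (e:Ordinal.{u})) := Ordinal.mod_lt y hc0
      by_cases hr0 : y % (ω ^ (e:Ordinal.{u})) = 0
      · rw [hr0, add_zero] at hyeq
        have hn0 : n ≠ 0 := by
          rintro rfl
          rw [Nat.cast_zero, mul_zero] at hyeq
          exact (Ordinal.isSuccLimit_iff.mp hy).1 hyeq.symm
        obtain ⟨n', rfl⟩ := Nat.exists_eq_succ_of_ne_zero hn0
        have hysplit : y = (ω ^ (e:Ordinal.{u})) * (n':Ordinal) + (ω ^ (e:Ordinal.{u})) := by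
          rw [← hyeq, Nat.cast_succ, mul_add, mul_one]
        by_cases hmn : m = n'
        · subst hmn
          refine ⟨(ω ^ (e:Ordinal.{u})) * (m:Ordinal), ?_, fun x hx1 hx2 => ?_⟩
          · rw [hysplit]
            simpa using (add_lt_add_iff_left ((ω ^ (e:Ordinal.{u})) * (m:Ordinal.{u}))).mpr hc
          · have hyQ : Q (e+1) m y := by
              refine Q_col ?_ ?_
              · rw [hysplit]
                simpa using (add_lt_add_iff_left ((ω ^ (e:Ordinal.{u})) * (m:Ordinal.{u}))).mpr hc
              · rw [hysplit, mul_add, mul_one]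
            have hxQ : Q (e+1) m x := by
              refine Q_col hx1 ?_
              rw [mul_add, mul_one, ← hysplit]
              exact hx2
            exact iff_of_true hxQ hyQ
        · have hclim : Order.IsSuccLimit (ω ^ (e:Ordinal.{u})) := by
            cases e with
            | zero =>
              exfalso
              simp only [Nat.cast_zero, opow_zero, one_mul] at hysplit
              have : y = Order.succ ((n' : Ordinal.{u})) := by
                rw [hysplit, Ordinal.add_one_eq_succ]
              exact Order.not_isSuccLimit_succ _ (this ▸ hy)
            | succ e' =>
              exact isSuccLimit_opow_left isSuccLimit_omega0
                (Nat.cast_ne_zero.mpr (Nat.succ_ne_zero e'))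
          obtain ⟨δ', hδ'c, hIH⟩ := IH m (ω ^ (e:Ordinal.{u})) hclim
          refine ⟨(ω ^ (e:Ordinal.{u})) * (n':Ordinal) + δ', ?_, fun x hx1 hx2 => ?_⟩
          · rw [hysplit]
            exact (add_lt_add_iff_left _).mpr hδ'c
          · have hbase_lt : (ω ^ (e:Ordinal.{u})) * (n':Ordinal) < x :=
              lt_of_le_of_lt le_self_add hx1
            have hxsub : (ω ^ (e:Ordinal.{u})) * (n':Ordinal) + (x - (ω ^ (e:Ordinal.{u})) * (n':Ordinal)) = x :=
              Ordinal.add_sub_cancel_of_le hbase_lt.le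
            have hx'1 : δ' < x - (ω ^ (e:Ordinal.{u})) * (n':Ordinal) := by
              rw [← add_lt_add_iff_left ((ω ^ (e:Ordinal.{u})) * (n':Ordinal.{u})), hxsub]
              exact hx1
            have hx'2 : x - (ω ^ (e:Ordinal.{u})) * (n':Ordinal) ≤ (ω ^ (e:Ordinal.{u})) := by
              rw [← add_le_add_iff_left ((ω ^ (e:Ordinal.{u})) * (n':Ordinal.{u})), hxsub, ← hysplit]
              exact hx2
            have hx2' : x ≤ (ω ^ (e:Ordinal.{u})) * ((n':Ordinal)+1) := by
              rw [mul_add, mul_one, ← hysplit]; exact hx2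
            have hy1 : (ω ^ (e:Ordinal.{u})) * (n':Ordinal) < y := by
              rw [hysplit]
              simpa using (add_lt_add_iff_left ((ω ^ (e:Ordinal.{u})) * (n':Ordinal.{u}))).mpr hc
            have hy2 : y ≤ (ω ^ (e:Ordinal.{u})) * ((n':Ordinal)+1) := by
              rw [mul_add, mul_one, ← hysplit]
            have hysub : y - (ω ^ (e:Ordinal.{u})) * (n':Ordinal) = (ω ^ (e:Ordinal.{u})) := by
              rw [hysplit, Ordinal.add_sub_cancel]
            rw [Q_char hmn hbase_lt hx2', Q_char hmn hy1 hy2, hysub,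
              hIH _ hx'1 hx'2]
      · -- y is interior to column n
        have hrlim : Order.IsSuccLimit (y % (ω ^ (e:Ordinal.{u}))) := by
          rcases Ordinal.zero_or_succ_or_isSuccLimit (y % (ω ^ (e:Ordinal.{u}))) with h | ⟨a, ha⟩ | h
          · exact absurd h hr0
          · exfalso
            rw [← ha, Ordinal.add_succ] at hyeq
            exact Order.not_isSuccLimit_succ _ (hyeq ▸ hy)
          · exact h
        have hy1 : (ω ^ (e:Ordinal.{u})) * (n:Ordinal) < y := by
          conv_rhs => rw [← hyeq]
          simpa using (add_lt_add_iff_left ((ω ^ (e:Ordinal.{u})) * (n:Ordinal.{u}))).mpr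
            (pos_iff_ne_zero.mpr hr0)
        have hylt : y < (ω ^ (e:Ordinal.{u})) * ((n:Ordinal)+1) := by
          conv_lhs => rw [← hyeq]
          rw [mul_add, mul_one]
          exact (add_lt_add_iff_left _).mpr hrc
        by_cases hmn : m = n
        · subst hmn
          refine ⟨(ω ^ (e:Ordinal.{u})) * (m:Ordinal), hy1, fun x hx1 hx2 => ?_⟩
          exact iff_of_true (Q_col hx1 (le_of_lt (lt_of_le_of_lt hx2 hylt)))
            (Q_col hy1 hylt.le)
        · obtain ⟨δ', hδ', hIH⟩ := IH m (y % (ω ^ (e:Ordinal.{u}))) hrlim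
          refine ⟨(ω ^ (e:Ordinal.{u})) * (n:Ordinal) + δ', ?_, fun x hx1 hx2 => ?_⟩
          · conv_rhs => rw [← hyeq]
            exact (add_lt_add_iff_left _).mpr hδ'
          · have hbase_lt : (ω ^ (e:Ordinal.{u})) * (n:Ordinal) < x :=
              lt_of_le_of_lt le_self_add hx1
            have hxsub : (ω ^ (e:Ordinal.{u})) * (n:Ordinal) + (x - (ω ^ (e:Ordinal.{u})) * (n:Ordinal)) = x :=
              Ordinal.add_sub_cancel_of_le hbase_lt.le
            have hx'1 : δ' < x - (ω ^ (e:Ordinal.{u})) * (n:Ordinal) := by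
              rw [← add_lt_add_iff_left ((ω ^ (e:Ordinal.{u})) * (n:Ordinal.{u})), hxsub]
              exact hx1
            have hx'2 : x - (ω ^ (e:Ordinal.{u})) * (n:Ordinal) ≤ y % (ω ^ (e:Ordinal.{u})) := by
              rw [← add_le_add_iff_left ((ω ^ (e:Ordinal.{u})) * (n:Ordinal.{u})), hxsub, hyeq]
              exact hx2
            have hysub : y - (ω ^ (e:Ordinal.{u})) * (n:Ordinal) = y % (ω ^ (e:Ordinal.{u})) := by
              conv_lhs => rw [← hyeq]
              rw [Ordinal.add_sub_cancel]
            rw [Q_char hmn hbase_lt (le_of_lt (lt_of_le_of_lt hx2 hylt)),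
              Q_char hmn hy1 hylt.le, hysub, hIH _ hx'1 hx'2]

end DeltaKProof

noncomputable section RichCont

namespace DeltaKProof2
open DeltaKProof


lemma lt_add_of_pos' {a b : Ordinal.{u}} (hb : 0 < b) : a < a + b := by
  have h := (add_lt_add_iff_left a).mpr hb
  rwa [add_zero] at h

/-- Richness: every finite pattern `T` of size at most `e` is realized by a point of
`(0, ω^e]` avoiding any given finite exclusion set `S`. -/
lemma Q_rich : ∀ (e : ℕ) (T S : Finset ℕ), T.card ≤ e → Disjoint T S →
    ∃ x : Ordinal.{u}, 0 < x ∧ x ≤ ω ^ (e:Ordinal) ∧ (∀ m ∈ T, Q e m x) ∧ ∀ s ∈ S, ¬ Q e s x := by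
  intro e
  induction e with
  | zero =>
    intro T S hT _
    rw [Nat.le_zero, Finset.card_eq_zero] at hT
    subst hT
    exact ⟨1, zero_lt_one, by simp, by simp, fun s _ h => h⟩
  | succ e IH =>
    intro T S hT hTS
    have hc : (0:Ordinal.{u}) < ω ^ (e:Ordinal) := opow_pos _ omega0_pos
    have hpow : ω ^ ((e+1 : ℕ):Ordinal.{u}) = ω ^ (e:Ordinal) * ω := by
      rw [Nat.cast_succ, Ordinal.add_one_eq_succ, opow_succ]
    -- choose the column index
    rcases eq_or_ne T ∅ with hTe | hTne
    · -- empty pattern : fresh column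
      obtain ⟨q, hq⟩ := Infinite.exists_notMem_finset S
      obtain ⟨x₀, hx₀pos, hx₀le, _, hx₀ex⟩ := IH ∅ S (by simp) (Finset.disjoint_left.mpr (by simp))
      refine ⟨ω ^ (e:Ordinal) * (q:Ordinal) + x₀, ?_, ?_, ?_, ?_⟩
      · exact lt_of_le_of_lt zero_le (lt_add_of_pos' hx₀pos)
      · rw [hpow]
        calc ω ^ (e:Ordinal.{u}) * (q:Ordinal) + x₀
            ≤ ω ^ (e:Ordinal) * (q:Ordinal) + ω ^ (e:Ordinal) := by
              exact (add_le_add_iff_left _).mpr hx₀le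
          _ = ω ^ (e:Ordinal) * ((q:Ordinal)+1) := by rw [mul_add, mul_one]
          _ ≤ ω ^ (e:Ordinal) * ω := by
              refine mul_le_mul_right ?_ _
              rw [← Nat.cast_succ]
              exact (nat_lt_omega0 _).le
      · subst hTe; simp
      · intro s hs
        have h1 : ω ^ (e:Ordinal.{u}) * (q:Ordinal) < ω ^ (e:Ordinal) * (q:Ordinal) + x₀ :=
          lt_add_of_pos' hx₀pos
        have h2 : ω ^ (e:Ordinal.{u}) * (q:Ordinal) + x₀ ≤ ω ^ (e:Ordinal) * ((q:Ordinal)+1) := by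
          rw [mul_add, mul_one]
          exact (add_le_add_iff_left _).mpr hx₀le
        rintro (⟨ha, hb⟩ | ⟨q', hq', ha, hb, hQ⟩)
        · exact hq ((col_unique ha hb h1 h2) ▸ hs)
        · have hq'q : q' = q := col_unique ha hb h1 h2
          subst hq'q
          rw [Ordinal.add_sub_cancel] at hQ
          exact hx₀ex s hs hQ
    · -- nonempty pattern
      have hTne' : T.Nonempty := Finset.nonempty_of_ne_empty hTne
      set m₁ := T.min' hTne' with hm₁
      have hm₁T : m₁ ∈ T := T.min'_mem hTne'
      obtain ⟨x₀, hx₀pos, hx₀le, hx₀mem, hx₀ex⟩ :=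
        IH (T.erase m₁) S (by
          rw [Finset.card_erase_of_mem hm₁T]; omega)
          (Finset.disjoint_left.mpr fun a ha => Finset.disjoint_left.mp hTS (Finset.mem_of_mem_erase ha))
      have h1 : ω ^ (e:Ordinal.{u}) * (m₁:Ordinal) < ω ^ (e:Ordinal) * (m₁:Ordinal) + x₀ :=
        lt_add_of_pos' hx₀pos
      have h2 : ω ^ (e:Ordinal.{u}) * (m₁:Ordinal) + x₀ ≤ ω ^ (e:Ordinal) * ((m₁:Ordinal)+1) := by
        rw [mul_add, mul_one]
        exact (add_le_add_iff_left _).mpr hx₀le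
      refine ⟨ω ^ (e:Ordinal) * (m₁:Ordinal) + x₀, ?_, ?_, ?_, ?_⟩
      · exact lt_of_le_of_lt zero_le h1
      · rw [hpow]
        refine le_trans h2 (mul_le_mul_right ?_ _)
        rw [← Nat.cast_succ]
        exact (nat_lt_omega0 _).le
      · intro m hm
        rcases eq_or_ne m m₁ with rfl | hmm₁
        · exact Q_col h1 h2
        · refine Or.inr ⟨m₁, ?_, h1, h2, ?_⟩
          · exact lt_of_le_of_ne (T.min'_le m hm) (Ne.symm hmm₁)
          · rw [Ordinal.add_sub_cancel]
            exact hx₀mem m (Finset.mem_erase.mpr ⟨hmm₁, hm⟩)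
      · intro s hs
        have hsm₁ : s ≠ m₁ := fun h => Finset.disjoint_left.mp hTS (h ▸ hm₁T) hs
        rintro (⟨ha, hb⟩ | ⟨q', hq', ha, hb, hQ⟩)
        · exact hsm₁ (col_unique ha hb h1 h2)
        · have hq'q : q' = m₁ := col_unique ha hb h1 h2
          subst hq'q
          rw [Ordinal.add_sub_cancel] at hQ
          exact hx₀ex s hs hQ

/-- indicator function of `U_m ⊆ [0, ω^e]`. -/
def gI (e m : ℕ) : Ordinal.{u} → ℝ := fun x => @ite _ (Q e m x) (Classical.dec _) 1 0

lemma gI_continuous (e m : ℕ) : Continuous (gI.{u} e m) := by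
  classical
  rw [continuous_iff_continuousAt]
  intro z
  have : ∀ᶠ x in 𝓝 z, gI.{u} e m x = gI.{u} e m z := by
    rcases Ordinal.zero_or_succ_or_isSuccLimit z with hz | hz | hz
    · have hop : IsOpen ({z} : Set Ordinal.{u}) := by
        rw [Ordinal.isOpen_singleton_iff]
        exact hz ▸ Ordinal.not_isSuccLimit_zero
      filter_upwards [hop.mem_nhds rfl] with x hx
      rw [Set.mem_singleton_iff.mp hx]
    · obtain ⟨a, rfl⟩ := hz
      have hop : IsOpen ({Order.succ a} : Set Ordinal.{u}) := by
        rw [Ordinal.isOpen_singleton_iff]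
        exact Order.not_isSuccLimit_succ a
      filter_upwards [hop.mem_nhds rfl] with x hx
      rw [Set.mem_singleton_iff.mp hx]
    · obtain ⟨δ, hδ, hconst⟩ := Q_const e m z hz
      have hzmem : z ∈ Set.Ioo δ (z+1) := by
        refine ⟨hδ, ?_⟩
        rw [Ordinal.add_one_eq_succ]
        exact Order.lt_succ z
      filter_upwards [isOpen_Ioo.mem_nhds hzmem] with x hx
      have hx2 : x ≤ z := by
        have := hx.2
        rw [Ordinal.add_one_eq_succ, Order.lt_succ_iff] at this
        exact this
      rcases Classical.em (Q e m z) with hq | hq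
      · simp [gI, hq, (hconst x hx.1 hx2).mpr hq]
      · have hq2 : ¬ Q e m x := fun h => hq ((hconst x hx.1 hx2).mp h)
        simp [gI, hq, hq2]
  exact Filter.EventuallyEq.continuousAt this

end DeltaKProof2
end RichCont

noncomputable section Construction

namespace DeltaKProof3
open DeltaKProof DeltaKProof2

variable {k : ℕ}

/-- The embedding `Δ_k → C([0, ω^(k-1)])`. -/
def FF (k : ℕ) (σ : Finset ℕ) :
    C(Set.Iic (ω ^ ((k - 1 : ℕ) : Ordinal.{u})), ℝ) :=
  ⟨fun x => ∑ m ∈ σ, (1 - 2 * gI (k-1) m x.val),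
   continuous_finset_sum σ fun m _ =>
     continuous_const.sub (continuous_const.mul ((gI_continuous (k-1) m).comp continuous_subtype_val))⟩

lemma FF_apply (σ : Finset ℕ) (x : Set.Iic (ω ^ ((k - 1 : ℕ) : Ordinal.{u}))) :
    FF k σ x = ∑ m ∈ σ, (1 - 2 * gI (k-1) m x.val) := rfl

lemma FF_sub_apply (σ τ : Finset ℕ) (x : Set.Iic (ω ^ ((k - 1 : ℕ) : Ordinal.{u}))) :
    (FF k σ - FF k τ) x
      = (∑ m ∈ σ \ τ, (1 - 2 * gI (k-1) m x.val))
        - ∑ m ∈ τ \ σ, (1 - 2 * gI (k-1) m x.val) := by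
  have hσ : ∑ m ∈ σ, (1 - 2 * gI (k-1) m x.val)
      = (∑ m ∈ σ \ (σ ∩ τ), (1 - 2 * gI (k-1) m x.val))
        + ∑ m ∈ σ ∩ τ, (1 - 2 * gI (k-1) m x.val) :=
    (Finset.sum_sdiff Finset.inter_subset_left).symm
  have hτ : ∑ m ∈ τ, (1 - 2 * gI (k-1) m x.val)
      = (∑ m ∈ τ \ (τ ∩ σ), (1 - 2 * gI (k-1) m x.val))
        + ∑ m ∈ τ ∩ σ, (1 - 2 * gI (k-1) m x.val) :=
    (Finset.sum_sdiff Finset.inter_subset_left).symm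
  rw [ContinuousMap.sub_apply, FF_apply, FF_apply, hσ, hτ,
    Finset.sdiff_inter_self_left, Finset.sdiff_inter_self_left, Finset.inter_comm τ σ]
  ring

lemma abs_term_le (m : ℕ) (x : Ordinal.{u}) : |1 - 2 * gI (k-1) m x| ≤ 1 := by
  unfold gI
  rcases Classical.em (Q (k-1) m x) with h | h <;> simp [h] <;> norm_num

lemma card_symmDiff_eq (σ τ : Finset ℕ) :
    (symmDiff σ τ).card = (σ \ τ).card + (τ \ σ).card := by
  rw [symmDiff_def, Finset.sup_eq_union]
  exact Finset.card_union_of_disjoint (disjoint_sdiff_sdiff)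

lemma FF_norm_le (σ τ : Finset ℕ) :
    ‖FF.{u} k σ - FF k τ‖ ≤ ((symmDiff σ τ).card : ℝ) := by
  rw [ContinuousMap.norm_le _ (by positivity)]
  intro x
  rw [FF_sub_apply, Real.norm_eq_abs, card_symmDiff_eq]
  push_cast
  calc |(∑ m ∈ σ \ τ, (1 - 2 * gI (k-1) m x.val))
        - ∑ m ∈ τ \ σ, (1 - 2 * gI (k-1) m x.val)|
      ≤ |∑ m ∈ σ \ τ, (1 - 2 * gI (k-1) m x.val)|
        + |∑ m ∈ τ \ σ, (1 - 2 * gI (k-1) m x.val)| := abs_sub _ _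
    _ ≤ ((σ \ τ).card : ℝ) + ((τ \ σ).card : ℝ) := by
        gcongr
        · calc |∑ m ∈ σ \ τ, (1 - 2 * gI (k-1) m x.val)|
              ≤ ∑ m ∈ σ \ τ, |1 - 2 * gI (k-1) m x.val| := Finset.abs_sum_le_sum_abs _ _
            _ ≤ ∑ _m ∈ σ \ τ, (1:ℝ) := Finset.sum_le_sum fun m _ => abs_term_le m x.val
            _ = ((σ \ τ).card : ℝ) := by simp
        · calc |∑ m ∈ τ \ σ, (1 - 2 * gI (k-1) m x.val)|
              ≤ ∑ m ∈ τ \ σ, |1 - 2 * gI (k-1) m x.val| := Finset.abs_sum_le_sum_abs _ _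
            _ ≤ ∑ _m ∈ τ \ σ, (1:ℝ) := Finset.sum_le_sum fun m _ => abs_term_le m x.val
            _ = ((τ \ σ).card : ℝ) := by simp

/-- The key separation estimate coming from the richness of the pattern sets. -/
lemma FF_sep (hk : 2 ≤ k) (σ τ : Finset ℕ) (T : Finset ℕ) (hT : T ⊆ τ \ σ)
    (hTcard : T.card ≤ k - 1) :
    ((σ \ τ).card : ℝ) - ((τ \ σ).card : ℝ) + 2 * T.card ≤ ‖FF.{u} k σ - FF k τ‖ := by
  have hdisj : Disjoint T ((σ ∪ τ) \ T) := Finset.disjoint_sdiff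
  obtain ⟨x₀, _, hx₀le, hmem, hex⟩ := Q_rich.{u} (k-1) T ((σ ∪ τ) \ T) hTcard hdisj
  set p : Set.Iic (ω ^ ((k - 1 : ℕ) : Ordinal.{u})) := ⟨x₀, Set.mem_Iic.mpr hx₀le⟩ with hp
  have hval : (FF k σ - FF k τ) p
      = ((σ \ τ).card : ℝ) - (((τ \ σ).card : ℝ) - 2 * T.card) := by
    rw [FF_sub_apply]
    have h1 : ∑ m ∈ σ \ τ, (1 - 2 * gI (k-1) m p.val) = ((σ \ τ).card : ℝ) := by
      rw [show (((σ \ τ).card : ℝ)) = ∑ _m ∈ σ \ τ, (1:ℝ) by simp]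
      refine Finset.sum_congr rfl fun m hm => ?_
      have hmS : m ∈ (σ ∪ τ) \ T := by
        rw [Finset.mem_sdiff]
        refine ⟨Finset.mem_union_left _ (Finset.mem_sdiff.mp hm).1, fun hmT => ?_⟩
        exact (Finset.mem_sdiff.mp (hT hmT)).2 (Finset.mem_sdiff.mp hm).1
      have hq : ¬ Q (k-1) m p.val := hex m hmS
      simp [gI, hq]
    have h2 : ∑ m ∈ τ \ σ, (1 - 2 * gI (k-1) m p.val)
        = ((τ \ σ).card : ℝ) - 2 * T.card := by
      rw [← Finset.sum_sdiff hT]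
      have h2a : ∑ m ∈ (τ \ σ) \ T, (1 - 2 * gI (k-1) m p.val) = (((τ \ σ) \ T).card : ℝ) := by
        rw [show ((((τ \ σ) \ T).card : ℝ)) = ∑ _m ∈ (τ \ σ) \ T, (1:ℝ) by simp]
        refine Finset.sum_congr rfl fun m hm => ?_
        have hmS : m ∈ (σ ∪ τ) \ T := by
          rw [Finset.mem_sdiff] at hm ⊢
          exact ⟨Finset.mem_union_right _ (Finset.mem_sdiff.mp hm.1).1, hm.2⟩
        have hq : ¬ Q (k-1) m p.val := hex m hmS
        simp [gI, hq]
      have h2b : ∑ m ∈ T, (1 - 2 * gI (k-1) m p.val) = -(T.card : ℝ) := by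
        rw [show (-(T.card : ℝ)) = ∑ _m ∈ T, (-1:ℝ) by simp]
        refine Finset.sum_congr rfl fun m hm => ?_
        have hq : Q (k-1) m p.val := hmem m hm
        simp [gI, hq]
        ring
      rw [h2a, h2b]
      have hcard : (((τ \ σ) \ T).card : ℝ) = ((τ \ σ).card : ℝ) - T.card := by
        rw [Finset.card_sdiff_of_subset hT]
        have := Finset.card_le_card hT
        push_cast [Nat.cast_sub this]
        ring
      rw [hcard]
      ring
    rw [h1, h2]
  have habs : ((σ \ τ).card : ℝ) - ((τ \ σ).card : ℝ) + 2 * T.card ≤ |(FF k σ - FF k τ) p| := by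
    rw [hval]
    have : ((σ \ τ).card : ℝ) - (((τ \ σ).card : ℝ) - 2 * T.card)
        = ((σ \ τ).card : ℝ) - ((τ \ σ).card : ℝ) + 2 * T.card := by ring
    rw [this]
    exact le_abs_self _
  calc ((σ \ τ).card : ℝ) - ((τ \ σ).card : ℝ) + 2 * T.card
      ≤ |(FF k σ - FF k τ) p| := habs
    _ ≤ ‖FF k σ - FF k τ‖ := by
        rw [← Real.norm_eq_abs]
        exact ContinuousMap.norm_coe_le_norm _ p

end DeltaKProof3
end Construction

noncomputable section Membership

namespace DeltaKProof4
open DeltaKProof DeltaKProof2 DeltaKProof3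

lemma FF_main {k : ℕ} (hk : 2 ≤ k) (σ τ : Finset ℕ) (hσ : σ.card ≤ k) (hτ : τ.card ≤ k) :
    ((k:ℝ)-1)/k * ((symmDiff σ τ).card : ℝ) ≤ ‖FF.{u} k σ - FF k τ‖ := by
  set a := (σ \ τ).card with hadef
  set b := (τ \ σ).card with hbdef
  have ha : a ≤ k := le_trans (Finset.card_le_card Finset.sdiff_subset) hσ
  have hb : b ≤ k := le_trans (Finset.card_le_card Finset.sdiff_subset) hτ
  have hk0 : (0:ℝ) < (k:ℝ) := by positivity
  have hfrac : ((k:ℝ)-1)/k ≤ 1 := by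
    rw [div_le_one hk0]; linarith
  have hfracpos : (0:ℝ) ≤ ((k:ℝ)-1)/k := by
    apply div_nonneg _ hk0.le
    have : (2:ℝ) ≤ (k:ℝ) := by exact_mod_cast hk
    linarith
  have hd : ((symmDiff σ τ).card : ℝ) = (a:ℝ) + b := by
    rw [card_symmDiff_eq]; push_cast; ring
  rcases Nat.lt_or_ge b k with hbk | hbk
  · -- b ≤ k-1 : take T = τ \ σ
    have hsep := FF_sep.{u} hk σ τ (τ \ σ) (subset_refl _) (by omega)
    rw [← hbdef, ← hadef] at hsep
    calc ((k:ℝ)-1)/k * ((symmDiff σ τ).card : ℝ)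
        ≤ 1 * ((symmDiff σ τ).card : ℝ) := by
          apply mul_le_mul_of_nonneg_right hfrac (by positivity)
      _ = (a:ℝ) + b := by rw [one_mul, hd]
      _ = (a:ℝ) - b + 2 * b := by ring
      _ ≤ _ := hsep
  · rcases Nat.lt_or_ge a k with hak | hak
    · -- a ≤ k-1 : symmetric
      have hsep := FF_sep.{u} hk τ σ (σ \ τ) (subset_refl _) (by omega)
      rw [← hbdef, ← hadef, norm_sub_rev] at hsep
      calc ((k:ℝ)-1)/k * ((symmDiff σ τ).card : ℝ)
          ≤ 1 * ((symmDiff σ τ).card : ℝ) := by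
            apply mul_le_mul_of_nonneg_right hfrac (by positivity)
        _ = (a:ℝ) + b := by rw [one_mul, hd]
        _ = (b:ℝ) - a + 2 * a := by ring
        _ ≤ _ := hsep
    · -- a = b = k
      have hae : a = k := le_antisymm ha hak
      have hbe : b = k := le_antisymm hb hbk
      obtain ⟨T, hTsub, hTcard⟩ := Finset.exists_subset_card_eq
        (show k - 1 ≤ (τ \ σ).card by omega)
      have hsep := FF_sep.{u} hk σ τ T hTsub (le_of_eq hTcard)
      rw [← hbdef, ← hadef] at hsep
      have hcast : ((k - 1 : ℕ) : ℝ) = (k:ℝ) - 1 := by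
        have : (1:ℕ) ≤ k := by omega
        push_cast [Nat.cast_sub this]
        ring
      calc ((k:ℝ)-1)/k * ((symmDiff σ τ).card : ℝ)
          = ((k:ℝ)-1)/k * ((k:ℝ) + k) := by rw [hd, hae, hbe]
        _ = 2 * ((k:ℝ) - 1) := by field_simp; ring
        _ = (a:ℝ) - b + 2 * ((k - 1 : ℕ) : ℝ) := by rw [hae, hbe, hcast]; ring
        _ = (a:ℝ) - b + 2 * (T.card : ℝ) := by rw [hTcard]
        _ ≤ _ := hsep

lemma mem_distortion_set {k : ℕ} (hk : 2 ≤ k) :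
    ∃ (f : {σ : Finset ℕ // σ.card ≤ k} →
        C(↥(Set.Iic (Ordinal.omega0 ^ ((k - 1 : ℕ) : Ordinal.{u}))), ℝ)) (s : ℝ), 0 < s ∧
      ∀ σ τ : {σ : Finset ℕ // σ.card ≤ k},
        s * ((symmDiff σ.1 τ.1).card : ℝ) ≤ ‖f σ - f τ‖ ∧
          ‖f σ - f τ‖ ≤ s * ((k:ℝ)/((k:ℝ)-1)) * ((symmDiff σ.1 τ.1).card : ℝ) := by
  have hk0 : (0:ℝ) < (k:ℝ) := by positivity
  have hk2 : (2:ℝ) ≤ (k:ℝ) := by exact_mod_cast hk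
  have hk1 : (0:ℝ) < (k:ℝ) - 1 := by linarith
  refine ⟨fun σ => FF.{u} k σ.1, ((k:ℝ)-1)/k, by positivity, fun σ τ => ?_⟩
  constructor
  · exact FF_main.{u} hk σ.1 τ.1 σ.2 τ.2
  · have hone : ((k:ℝ)-1)/k * ((k:ℝ)/((k:ℝ)-1)) = 1 := by
      field_simp
    rw [hone, one_mul]
    exact FF_norm_le.{u} σ.1 τ.1

end DeltaKProof4
end Membership

noncomputable section LowerBound

namespace DeltaKProof5
open DeltaKProof DeltaKProof2 DeltaKProof3

lemma not_Rk_top {k : ℕ} (hk : 1 ≤ k) (x : Ordinal.{u})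
    (hx : x ≤ ω ^ ((k-1:ℕ):Ordinal)) : ¬ Rk k x := by
  rintro (h0 | ⟨hne, hdvd⟩)
  · omega
  · have h1 : ω ^ ((k:ℕ):Ordinal.{u}) ≤ x := Ordinal.le_of_dvd hne hdvd
    have h2 : ω ^ ((k-1:ℕ):Ordinal.{u}) < ω ^ ((k:ℕ):Ordinal.{u}) := by
      rw [opow_lt_opow_iff_right one_lt_omega0, Nat.cast_lt]
      omega
    exact absurd (lt_of_le_of_lt (le_trans h1 hx) h2) (lt_irrefl _)

lemma symmDiff_insert_same {a : ℕ} {σ τ : Finset ℕ} (ha1 : a ∉ σ) (ha2 : a ∉ τ) :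
    symmDiff (insert a σ) (insert a τ) = symmDiff σ τ := by
  ext x
  by_cases hxa : x = a
  · subst hxa
    simp [Finset.mem_symmDiff, ha1, ha2]
  · simp [Finset.mem_symmDiff, Finset.mem_insert, hxa]

lemma symmDiff_insert_self {a : ℕ} {σ : Finset ℕ} (ha : a ∉ σ) :
    symmDiff (insert a σ) σ = {a} := by
  ext x
  by_cases hxa : x = a <;>
    simp [Finset.mem_symmDiff, Finset.mem_insert, hxa, ha] <;> tauto

lemma card_symmDiff_of_disjoint {σ τ : Finset ℕ} (h : Disjoint σ τ) :
    (symmDiff σ τ).card = σ.card + τ.card := by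
  rw [card_symmDiff_eq, Finset.sdiff_eq_self_of_disjoint h,
    Finset.sdiff_eq_self_of_disjoint h.symm]

lemma lower_bound' {k : ℕ} (hk : 2 ≤ k) {D : ℝ}
    (F : Finset ℕ → C(↥(Set.Iic (ω ^ ((k - 1 : ℕ) : Ordinal.{u}))), ℝ))
    (s : ℝ) (hs : 0 < s)
    (H' : ∀ (ρ₁ ρ₂ : Finset ℕ), ρ₁.card ≤ k → ρ₂.card ≤ k →
      s * ((symmDiff ρ₁ ρ₂).card : ℝ) ≤ ‖F ρ₁ - F ρ₂‖ ∧
        ‖F ρ₁ - F ρ₂‖ ≤ s * D * ((symmDiff ρ₁ ρ₂).card : ℝ)) :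
    (k:ℝ)/((k:ℝ)-1) ≤ D := by
  classical
  have hk0 : (0:ℝ) < (k:ℝ) := by positivity
  have hk2 : (2:ℝ) ≤ (k:ℝ) := by exact_mod_cast hk
  have hk1 : (0:ℝ) < (k:ℝ) - 1 := by linarith
  -- D ≥ 1
  have hD1 : 1 ≤ D := by
    have h := H' ∅ {0} (by simp) (by simp; omega)
    have hcard : ((symmDiff (∅ : Finset ℕ) {0}).card : ℝ) = 1 := by
      rw [card_symmDiff_of_disjoint (by simp)]
      simp
    rw [hcard, mul_one, mul_one] at h
    have := le_trans h.1 h.2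
    exact (mul_le_mul_iff_right₀ hs).mp (by simpa using this)
  have hD0 : 0 ≤ D := by linarith
  -- main estimate for every ε > 0
  have key : ∀ ε : ℝ, 0 < ε → (2*(k:ℝ)) ≤ 2*((k:ℝ)-1)*D + 3*(k:ℝ)*ε := by
    intro ε hε
    set B : ℕ → ℝ := fun i => s * (2*((i:ℝ) - 1) * D + 3 * (i:ℝ) * ε) with hBdef
    have main : ∀ i, i ≤ k → ∃ σ τ : Finset ℕ, σ.card = i ∧ τ.card = i ∧ Disjoint σ τ ∧
        ∀ x : Set.Iic (ω ^ ((k - 1 : ℕ) : Ordinal.{u})), Rk (k - i) x.val → |(F σ - F τ) x| ≤ B i := by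
      intro i
      induction i with
      | zero =>
        intro _
        refine ⟨∅, ∅, rfl, rfl, Finset.disjoint_empty_left _, fun x hRk => ?_⟩
        exact absurd hRk (not_Rk_top (by omega) x.val x.2)
      | succ i IH =>
        intro hik
        obtain ⟨σ, τ, hσc, hτc, hdisj, hinv⟩ := IH (by omega)
        have hσk : σ.card ≤ k := by omega
        have hτk : τ.card ≤ k := by omega
        -- the exceptional set
        set W : Set (Set.Iic (ω ^ ((k - 1 : ℕ) : Ordinal.{u}))) :=
          {x | Rk (k - (i+1)) x.val ∧ B i + s*ε ≤ |(F σ - F τ) x|} with hWdef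
        have hWfin : W.Finite := by
          by_contra hinf
          have hval : (Subtype.val '' W).Infinite :=
            Set.Infinite.image (Set.injOn_of_injective Subtype.val_injective) hinf
          obtain ⟨u, humono, humem⟩ := exists_strictMono_seq_of_infinite hval
          have hbdd : ∀ n, u n ≤ ω ^ ((k-1:ℕ):Ordinal.{u}) := by
            intro n
            obtain ⟨w, _, he⟩ := humem n
            rw [← he]
            exact w.2
          have hy_le : (⨆ n, u n) ≤ ω ^ ((k-1:ℕ):Ordinal.{u}) :=
            Ordinal.iSup_le_iff.mpr hbdd
          have hmem' : ∀ n, Rk (k - (i+1)) (u n) := by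
            intro n
            obtain ⟨w, hw, he⟩ := humem n
            rw [← he]
            exact hw.1
          have hyRk : Rk (k - i) (⨆ n, u n) := by
            have h1 := rk_iSup humono hmem'
            have harith : (k - (i+1)) + 1 = k - i := by omega
            rwa [harith] at h1
          have hyK : (⨆ n, u n) ∈ Set.Iic (ω ^ ((k - 1 : ℕ) : Ordinal.{u})) := hy_le
          have hinvy := hinv ⟨_, hyK⟩ hyRk
          have htend : Tendsto (fun n => (⟨u n, hbdd n⟩ :
              Set.Iic (ω ^ ((k - 1 : ℕ) : Ordinal.{u})))) atTop (𝓝 ⟨_, hyK⟩) := by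
            rw [tendsto_subtype_rng]
            exact tendsto_atTop_ciSup humono.monotone (Ordinal.bddAbove_range u)
          have hcont : Tendsto (fun n => |(F σ - F τ) ⟨u n, hbdd n⟩|) atTop
              (𝓝 |(F σ - F τ) ⟨_, hyK⟩|) :=
            (((F σ - F τ).continuous.tendsto _).comp htend).abs
          have hlb : ∀ n, B i + s*ε ≤ |(F σ - F τ) ⟨u n, hbdd n⟩| := by
            intro n
            obtain ⟨w, hw, he⟩ := humem n
            have hww : (⟨u n, hbdd n⟩ :
                Set.Iic (ω ^ ((k - 1 : ℕ) : Ordinal.{u}))) = w := by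
              apply Subtype.ext
              exact he.symm
            rw [hww]
            exact hw.2
          have hge := ge_of_tendsto hcont (Filter.Eventually.of_forall hlb)
          have hsε : 0 < s * ε := mul_pos hs hε
          linarith
        set Wf : Finset (Set.Iic (ω ^ ((k - 1 : ℕ) : Ordinal.{u}))) := hWfin.toFinset with hWf
        -- fresh indices
        set M : ℕ := (σ ∪ τ).sup id + 1 with hM
        have hfresh : ∀ n : ℕ, (n + M) ∉ σ ∪ τ := by
          intro n hmem
          have := Finset.le_sup (f := id) hmem
          simp only [id] at this
          omega
        -- the vector-valued sequence
        set v : ℕ → (↥Wf → ℝ × ℝ) := fun n w =>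
          (F (insert (n + M) σ) w.1, F (insert (n + M) τ) w.1) with hv
        have hFval : ∀ (ρ : Finset ℕ), ρ.card ≤ k →
            ∀ x : Set.Iic (ω ^ ((k - 1 : ℕ) : Ordinal.{u})),
            |F ρ x| ≤ ‖F ∅‖ + s*D*(k:ℝ) := by
          intro ρ hρ x
          have h1 : |F ρ x| ≤ ‖F ρ‖ := by
            rw [← Real.norm_eq_abs]
            exact ContinuousMap.norm_coe_le_norm _ x
          have h2 : ‖F ρ‖ ≤ ‖F ∅‖ + ‖F ρ - F ∅‖ := by
            have heq : F ρ = F ∅ + (F ρ - F ∅) := by abel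
            conv_lhs => rw [heq]
            exact norm_add_le _ _
          have h3 : ‖F ρ - F ∅‖ ≤ s * D * ((symmDiff ρ ∅).card : ℝ) :=
            (H' ρ ∅ hρ (by simp)).2
          have h4 : ((symmDiff ρ ∅).card : ℝ) ≤ (k:ℝ) := by
            rw [show (∅ : Finset ℕ) = ⊥ from rfl, symmDiff_bot]
            exact_mod_cast hρ
          have h5 : s * D * ((symmDiff ρ ∅).card : ℝ) ≤ s * D * (k:ℝ) := by
            apply mul_le_mul_of_nonneg_left h4 (by positivity)
          linarith
        have hbound : ∀ n, v n ∈ Metric.closedBall (0 : ↥Wf → ℝ × ℝ)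
            (‖F ∅‖ + s*D*(k:ℝ)) := by
          intro n
          rw [Metric.mem_closedBall, dist_zero_right]
          have hnonneg : (0:ℝ) ≤ ‖F ∅‖ + s*D*(k:ℝ) := by positivity
          rw [pi_norm_le_iff_of_nonneg hnonneg]
          intro w
          rw [Prod.norm_def]
          apply max_le
          · rw [Real.norm_eq_abs]
            exact hFval _ (by rw [Finset.card_insert_of_notMem
                (fun hc => hfresh n (Finset.mem_union_left _ hc))]; omega) _
          · rw [Real.norm_eq_abs]
            exact hFval _ (by rw [Finset.card_insert_of_notMem
                (fun hc => hfresh n (Finset.mem_union_right _ hc))]; omega) _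
        obtain ⟨b, -, φ, hφ, hconv⟩ :=
          tendsto_subseq_of_bounded Metric.isBounded_closedBall hbound
        have hsε : 0 < s * ε := mul_pos hs hε
        rw [Metric.tendsto_atTop] at hconv
        obtain ⟨N, hN⟩ := hconv (s*ε/2) (by positivity)
        -- three indices
        have hdist : ∀ a b' : ℕ, N ≤ a → N ≤ b' →
            dist (v (φ a)) (v (φ b')) < s * ε := by
          intro a b' ha hb'
          calc dist (v (φ a)) (v (φ b')) ≤ dist (v (φ a)) b + dist b (v (φ b')) :=
                dist_triangle _ _ _
            _ < s*ε/2 + s*ε/2 := by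
                have h1 := hN a ha
                have h2 := hN b' hb'
                simp only [Function.comp_apply] at h1 h2
                rw [dist_comm b (v (φ b'))]
                linarith
            _ = s*ε := by ring
        set j₁ : ℕ := φ N + M with hj₁
        set j₂ : ℕ := φ (N+1) + M with hj₂
        set j₃ : ℕ := φ (N+2) + M with hj₃
        have hφ1 : φ N < φ (N+1) := hφ (by omega)
        have hφ2 : φ (N+1) < φ (N+2) := hφ (by omega)
        have hj23 : j₂ ≠ j₃ := by omega
        have hj₂fresh : j₂ ∉ σ ∪ τ := hfresh _
        have hj₃fresh : j₃ ∉ σ ∪ τ := hfresh _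
        have hj₁fresh : j₁ ∉ σ ∪ τ := hfresh _
        have hj₂σ : j₂ ∉ σ := fun hc => hj₂fresh (Finset.mem_union_left _ hc)
        have hj₃τ : j₃ ∉ τ := fun hc => hj₃fresh (Finset.mem_union_right _ hc)
        have hj₁σ : j₁ ∉ σ := fun hc => hj₁fresh (Finset.mem_union_left _ hc)
        have hj₁τ : j₁ ∉ τ := fun hc => hj₁fresh (Finset.mem_union_right _ hc)
        refine ⟨insert j₂ σ, insert j₃ τ, ?_, ?_, ?_, ?_⟩
        · rw [Finset.card_insert_of_notMem hj₂σ, hσc]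
        · rw [Finset.card_insert_of_notMem hj₃τ, hτc]
        · rw [Finset.disjoint_left]
          intro a haσ' haτ'
          rcases Finset.mem_insert.mp haσ' with rfl | haσ
          · rcases Finset.mem_insert.mp haτ' with h | h
            · exact hj23 h
            · exact hj₂fresh (Finset.mem_union_right _ h)
          · rcases Finset.mem_insert.mp haτ' with rfl | haτ
            · exact hj₃fresh (Finset.mem_union_left _ haσ)
            · exact Finset.disjoint_left.mp hdisj haσ haτ
        · intro x hRkx
          have hcard₂ : (insert j₂ σ).card ≤ k := by
            rw [Finset.card_insert_of_notMem hj₂σ]; omega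
          have hcard₃ : (insert j₃ τ).card ≤ k := by
            rw [Finset.card_insert_of_notMem hj₃τ]; omega
          have hcard₁σ : (insert j₁ σ).card ≤ k := by
            rw [Finset.card_insert_of_notMem hj₁σ]; omega
          have hcard₁τ : (insert j₁ τ).card ≤ k := by
            rw [Finset.card_insert_of_notMem hj₁τ]; omega
          have hsub : ∀ (ρ₁ ρ₂ : Finset ℕ), (F ρ₁ - F ρ₂) x = F ρ₁ x - F ρ₂ x :=
            fun _ _ => rfl
          by_cases hxW : x ∈ W
          · -- x in the exceptional set : use the three close indices
            have hxWf : x ∈ Wf := (Set.Finite.mem_toFinset hWfin).mpr hxW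
            set w : ↥Wf := ⟨x, hxWf⟩ with hw
            have h12 : |F (insert j₂ σ) x - F (insert j₁ σ) x| ≤ s * ε := by
              have hd := hdist (N+1) N (by omega) (le_refl N)
              have hc1 : dist (v (φ (N+1)) w) (v (φ N) w) ≤ dist (v (φ (N+1))) (v (φ N)) :=
                dist_le_pi_dist _ _ w
              have hc2 : dist (v (φ (N+1)) w).1 (v (φ N) w).1 ≤ dist (v (φ (N+1)) w) (v (φ N) w) := by
                rw [Prod.dist_eq]
                exact le_max_left _ _
              have : dist (F (insert j₂ σ) x) (F (insert j₁ σ) x) ≤ dist (v (φ (N+1))) (v (φ N)) :=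
                le_trans hc2 hc1
              rw [Real.dist_eq] at this
              linarith
            have h34 : |F (insert j₁ τ) x - F (insert j₃ τ) x| ≤ s * ε := by
              have hd := hdist N (N+2) (le_refl N) (by omega)
              have hc1 : dist (v (φ N) w) (v (φ (N+2)) w) ≤ dist (v (φ N)) (v (φ (N+2))) :=
                dist_le_pi_dist _ _ w
              have hc2 : dist (v (φ N) w).2 (v (φ (N+2)) w).2 ≤ dist (v (φ N) w) (v (φ (N+2)) w) := by
                rw [Prod.dist_eq]
                exact le_max_right _ _
              have : dist (F (insert j₁ τ) x) (F (insert j₃ τ) x) ≤ dist (v (φ N)) (v (φ (N+2))) :=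
                le_trans hc2 hc1
              rw [Real.dist_eq] at this
              linarith
            have hmid : |F (insert j₁ σ) x - F (insert j₁ τ) x| ≤ s * D * (2*(i:ℝ)) := by
              have h1 : |F (insert j₁ σ) x - F (insert j₁ τ) x|
                  ≤ ‖F (insert j₁ σ) - F (insert j₁ τ)‖ := by
                rw [← Real.norm_eq_abs, ← hsub]
                exact ContinuousMap.norm_coe_le_norm _ x
              have h2 := (H' (insert j₁ σ) (insert j₁ τ) hcard₁σ hcard₁τ).2
              have h3 : symmDiff (insert j₁ σ) (insert j₁ τ) = symmDiff σ τ :=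
                symmDiff_insert_same hj₁σ hj₁τ
              have h4 : ((symmDiff σ τ).card : ℝ) = 2*(i:ℝ) := by
                rw [card_symmDiff_of_disjoint hdisj, hσc, hτc]
                push_cast
                ring
              rw [h3, h4] at h2
              linarith
            have hchain : |(F (insert j₂ σ) - F (insert j₃ τ)) x|
                ≤ s*ε + s * D * (2*(i:ℝ)) + s*ε := by
              rw [hsub]
              have t1 := abs_sub_le (F (insert j₂ σ) x) (F (insert j₁ τ) x) (F (insert j₃ τ) x)
              have t2 := abs_sub_le (F (insert j₂ σ) x) (F (insert j₁ σ) x) (F (insert j₁ τ) x)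
              linarith

            refine le_trans hchain ?_
            simp only [hBdef]
            push_cast
            have haux2 : s*(2*(((i:ℝ)+1)-1)*D + 3*((i:ℝ)+1)*ε)
                = (s*ε + s*D*(2*(i:ℝ)) + s*ε) + (3*(i:ℝ)+1)*(s*ε) := by ring
            have hpos2 : 0 ≤ (3*(i:ℝ)+1)*(s*ε) := by positivity
            linarith
          · -- x not in the exceptional set : use the invariant
            have hxnot : ¬ (B i + s*ε ≤ |(F σ - F τ) x|) := by
              intro hc
              exact hxW ⟨hRkx, hc⟩
            push_neg at hxnot
            have h1 : |F (insert j₂ σ) x - F σ x| ≤ s * D := by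
              have ha : |F (insert j₂ σ) x - F σ x| ≤ ‖F (insert j₂ σ) - F σ‖ := by
                rw [← Real.norm_eq_abs, ← hsub]
                exact ContinuousMap.norm_coe_le_norm _ x
              have hb := (H' (insert j₂ σ) σ hcard₂ hσk).2
              rw [symmDiff_insert_self hj₂σ] at hb
              simp only [Finset.card_singleton, Nat.cast_one, mul_one] at hb
              linarith
            have h2 : |F τ x - F (insert j₃ τ) x| ≤ s * D := by
              have ha : |F τ x - F (insert j₃ τ) x| ≤ ‖F τ - F (insert j₃ τ)‖ := by
                rw [← Real.norm_eq_abs, ← hsub]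
                exact ContinuousMap.norm_coe_le_norm _ x
              have hb := (H' τ (insert j₃ τ) hτk hcard₃).2
              rw [symmDiff_comm, symmDiff_insert_self hj₃τ] at hb
              simp only [Finset.card_singleton, Nat.cast_one, mul_one] at hb
              linarith
            have hchain : |(F (insert j₂ σ) - F (insert j₃ τ)) x|
                ≤ s*D + |(F σ - F τ) x| + s*D := by
              rw [hsub]
              have t1 := abs_sub_le (F (insert j₂ σ) x) (F τ x) (F (insert j₃ τ) x)
              have t2 := abs_sub_le (F (insert j₂ σ) x) (F σ x) (F τ x)
              have t3 : |(F σ - F τ) x| = |F σ x - F τ x| := by rw [hsub]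
              linarith
            refine le_trans hchain ?_
            simp only [hBdef, ContinuousMap.sub_apply] at hxnot ⊢
            push_cast at hxnot ⊢
            have haux : s*(2*(((i:ℝ)+1)-1)*D + 3*((i:ℝ)+1)*ε)
                = (s*(2*((i:ℝ)-1)*D + 3*(i:ℝ)*ε) + s*ε + 2*(s*D)) + 2*(s*ε) := by ring
            linarith [mul_pos hs hε]
    -- conclude from i = k
    obtain ⟨σ, τ, hσc, hτc, hdisj, hinv⟩ := main k (le_refl k)
    have hinv' : ∀ x : Set.Iic (ω ^ ((k - 1 : ℕ) : Ordinal.{u})),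
        |(F σ - F τ) x| ≤ B k := fun x => hinv x (by rw [Nat.sub_self]; exact Rk_zero _)
    have hBk : 0 ≤ B k := by
      simp only [hBdef]
      apply mul_nonneg hs.le
      have h0 : 0 ≤ ((k:ℝ)-1)*D := mul_nonneg (by linarith) hD0
      have h1 : 0 ≤ (k:ℝ)*ε := mul_nonneg hk0.le hε.le
      nlinarith
    have hnorm : ‖F σ - F τ‖ ≤ B k := by
      rw [ContinuousMap.norm_le _ hBk]
      intro x
      rw [Real.norm_eq_abs]
      exact hinv' x
    have hlow := (H' σ τ (by omega) (by omega)).1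
    have hcard : ((symmDiff σ τ).card : ℝ) = 2*(k:ℝ) := by
      rw [card_symmDiff_of_disjoint hdisj, hσc, hτc]
      push_cast
      ring
    rw [hcard] at hlow
    have hfinal : s * (2*(k:ℝ)) ≤ B k := le_trans hlow hnorm
    simp only [hBdef] at hfinal
    have hfin2 := (mul_le_mul_iff_right₀ hs).mp hfinal
    linarith
  -- let ε → 0
  have h2k : (2*(k:ℝ)) ≤ 2*((k:ℝ)-1)*D := by
    apply le_of_forall_pos_le_add
    intro ε' hε'
    have h3k : (0:ℝ) < 3*(k:ℝ) := by positivity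
    have := key (ε'/(3*(k:ℝ))) (by positivity)
    calc (2*(k:ℝ)) ≤ 2*((k:ℝ)-1)*D + 3*(k:ℝ)*(ε'/(3*(k:ℝ))) := this
      _ = 2*((k:ℝ)-1)*D + ε' := by field_simp
  rw [div_le_iff₀ hk1]
  nlinarith

end DeltaKProof5
end LowerBound


/-- For `k ≥ 2`, the infimum over all bi-Lipschitz embeddings `f : Δ_k → C([0, ω^(k−1)])`
of the distortion of `f` equals `k/(k−1)` and is attained: `k/(k−1)` is the least `D` such
that some `f` satisfies `s·d_Δ(σ,τ) ≤ ‖f σ − f τ‖ ≤ s·D·d_Δ(σ,τ)` for some scaling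
`s > 0` (a scale-invariant reformulation of `dist(f) ≤ D`). -/
theorem isLeast_distortion_deltaK_C_omega_pow_pred (k : ℕ) (hk : 2 ≤ k) :
    IsLeast {D : ℝ |
      ∃ (f : {σ : Finset ℕ // σ.card ≤ k} →
          C(↥(Set.Iic (Ordinal.omega0 ^ ((k - 1 : ℕ) : Ordinal))), ℝ)) (s : ℝ), 0 < s ∧
        ∀ σ τ : {σ : Finset ℕ // σ.card ≤ k},
          s * ((symmDiff σ.1 τ.1).card : ℝ) ≤ ‖f σ - f τ‖ ∧
            ‖f σ - f τ‖ ≤ s * D * ((symmDiff σ.1 τ.1).card : ℝ)}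
      ((k : ℝ) / ((k : ℝ) - 1)) := by
  classical
  constructor
  · exact DeltaKProof4.mem_distortion_set hk
  · rintro D ⟨f, s, hs, H⟩
    refine DeltaKProof5.lower_bound' hk
      (fun σ => if h : σ.card ≤ k then f ⟨σ, h⟩ else 0) s hs ?_
    intro ρ₁ ρ₂ h₁ h₂
    simp only [dif_pos h₁, dif_pos h₂]
    exact H ⟨ρ₁, h₁⟩ ⟨ρ₂, h₂⟩
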